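/- arXiv:2201.06803 — 3 statements merged into one kernel-verified Lean document; each statement's English description precedes it below -/
import Mathlib

section
/- Let H be a Hilbert space, 𝒮 : ℝ≥0 → (H →L H) a strongly continuous semigroup, Π⁻¹ : H → H' a bounded map, and suppose there exist a dense subspace D ⊆ H, a constant ω > 0, and a non-negative quantity q(x) ≥ 0 such that for all x ∈ D and 0 ≤ σ ≤ t: ⟨𝒮(σ)x, Π⁻¹𝒮(σ)x⟩ ≥ ⟨𝒮(t)x, Π⁻¹𝒮(t)x⟩ + ω∫_σ^t ⟨𝒮(s)x, Π⁻¹𝒮(s)x⟩ds, where moreover a‖y‖² ≤ ⟨y,Π⁻¹y⟩ ≤ b‖y‖² for all y ∈ H with 0 < a ≤ b. Then ‖𝒮(t)x‖² ≤ (b/a) e^{-ωt}‖x‖² for all t ≥ 0 and x ∈ H. -/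
open MeasureTheory Filter Topology
open scoped RealInnerProductSpace

/-- exponential decay of the semigroup from the Lyapunov dissipation inequality. -/
theorem semigroup_decay_from_lyapunov
    {H : Type*} [NormedAddCommGroup H] [InnerProductSpace ℝ H] [CompleteSpace H]
    (S : ℝ → H →L[ℝ] H) (Pinv : H →L[ℝ] H)
    (hS0 : S 0 = 1)
    (hSadd : ∀ t s : ℝ, 0 ≤ t → 0 ≤ s → S (t + s) = (S t).comp (S s))
    (hScont : ∀ x : H, Continuous fun t => S t x)
    (D : Submodule ℝ H) (hdense : Dense (D : Set H))
    (ω : ℝ) (hω : 0 < ω)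
    (q : H → ℝ) (hq : ∀ x : H, 0 ≤ q x)
    (a b : ℝ) (ha : 0 < a) (hab : a ≤ b)
    (hlower : ∀ y : H, a * ‖y‖ ^ 2 ≤ ⟪y, Pinv y⟫)
    (hupper : ∀ y : H, ⟪y, Pinv y⟫ ≤ b * ‖y‖ ^ 2)
    (hdiss : ∀ x ∈ D, ∀ σ t : ℝ, 0 ≤ σ → σ ≤ t →
      ⟪S t x, Pinv (S t x)⟫ + ω * (∫ s in σ..t, ⟪S s x, Pinv (S s x)⟫)
        ≤ ⟪S σ x, Pinv (S σ x)⟫) :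
    ∀ t : ℝ, 0 ≤ t → ∀ x : H,
      ‖S t x‖ ^ 2 ≤ (b / a) * Real.exp (-ω * t) * ‖x‖ ^ 2 := by
  intro t ht
  -- First prove it for x ∈ D, then extend by density.
  have key : ∀ x ∈ D, ‖S t x‖ ^ 2 ≤ (b / a) * Real.exp (-ω * t) * ‖x‖ ^ 2 := by
    intro x hx
    set f : ℝ → ℝ := fun s => ⟪S s x, Pinv (S s x)⟫ with hf
    have hfc : Continuous f := by
      exact Continuous.inner (hScont x) (Pinv.continuous.comp (hScont x))
    have hfnn : ∀ s : ℝ, 0 ≤ f s := fun s =>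
      le_trans (by positivity) (le_trans (hlower (S s x)) le_rfl)
    -- f is antitone on [0, ∞)
    have hanti : ∀ σ u : ℝ, 0 ≤ σ → σ ≤ u → f u ≤ f σ := by
      intro σ u hσ hσu
      have hI : 0 ≤ ∫ s in σ..u, f s :=
        intervalIntegral.integral_nonneg hσu (fun s _ => hfnn s)
      have := hdiss x hx σ u hσ hσu
      nlinarith [mul_nonneg hω.le hI]
    -- single step: f u * (1 + ω*(u - σ)) ≤ f σ
    have hstep : ∀ σ u : ℝ, 0 ≤ σ → σ ≤ u → f u * (1 + ω * (u - σ)) ≤ f σ := by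
      intro σ u hσ hσu
      have hInt : ∫ s in σ..u, f u ≤ ∫ s in σ..u, f s := by
        apply intervalIntegral.integral_mono_on hσu
        · exact intervalIntegrable_const
        · exact hfc.intervalIntegrable σ u
        · intro s hs
          exact hanti s u (le_trans hσ hs.1) hs.2
      rw [intervalIntegral.integral_const, smul_eq_mul] at hInt
      have := hdiss x hx σ u hσ hσu
      nlinarith [mul_le_mul_of_nonneg_left hInt hω.le]
    -- iterate to get f t * (1 + ω*t/n)^n ≤ f 0
    have hiter : ∀ n : ℕ, f t * (1 + (ω * t) / n) ^ n ≤ f 0 := by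
      intro n
      rcases Nat.eq_zero_or_pos n with hn | hn
      · subst hn; simpa using hanti 0 t le_rfl ht
      have hnpos : (0 : ℝ) < n := by exact_mod_cast hn
      set h : ℝ := t / n with hh
      have hhnn : 0 ≤ h := div_nonneg ht hnpos.le
      have hbase : (0:ℝ) ≤ 1 + ω * h := by positivity
      have claim : ∀ k : ℕ, f (k * h) * (1 + ω * h) ^ k ≤ f 0 := by
        intro k
        induction k with
        | zero => simp
        | succ k ih =>
          have hk : (0:ℝ) ≤ k * h := by positivity
          have hle : (k:ℝ) * h ≤ (k + 1 : ℕ) * h := by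
            push_cast; nlinarith
          have h1 : f ((k+1 : ℕ) * h) * (1 + ω * ((k+1 : ℕ) * h - k * h)) ≤ f (k * h) :=
            hstep (k * h) ((k+1 : ℕ) * h) hk hle
          have h2 : ((k+1 : ℕ) : ℝ) * h - k * h = h := by push_cast; ring
          rw [h2] at h1
          calc f ((k+1:ℕ) * h) * (1 + ω * h) ^ (k+1)
              = (f ((k+1:ℕ) * h) * (1 + ω * h)) * (1 + ω * h) ^ k := by ring
            _ ≤ f (k * h) * (1 + ω * h) ^ k :=
                mul_le_mul_of_nonneg_right h1 (pow_nonneg hbase k)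
            _ ≤ f 0 := ih
      have := claim n
      have hnh : (n : ℝ) * h = t := by rw [hh]; field_simp [hnpos.ne']
      rw [hnh] at this
      have : f t * (1 + ω * (t / n)) ^ n ≤ f 0 := this
      convert this using 3
      field_simp
    -- take the limit n → ∞
    have hlim : Filter.Tendsto (fun n : ℕ => f t * (1 + (ω * t) / n) ^ n)
        Filter.atTop (𝓝 (f t * Real.exp (ω * t))) :=
      (Real.tendsto_one_add_div_pow_exp (ω * t)).const_mul (f t)
    have hfin : f t * Real.exp (ω * t) ≤ f 0 :=
      le_of_tendsto hlim (Filter.Eventually.of_forall hiter)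
    -- conclude
    have hfx0 : f 0 = ⟪x, Pinv x⟫ := by simp [hf, hS0]
    have h0 : f 0 ≤ b * ‖x‖ ^ 2 := by rw [hfx0]; exact hupper x
    have hft : f t ≤ Real.exp (-ω * t) * (b * ‖x‖ ^ 2) := by
      have hmul : Real.exp (-ω * t) * Real.exp (ω * t) = 1 := by
        rw [← Real.exp_add]; simp
      calc f t = Real.exp (-ω * t) * (f t * Real.exp (ω * t)) := by
            rw [show Real.exp (-ω*t) * (f t * Real.exp (ω*t))
              = (Real.exp (-ω*t) * Real.exp (ω*t)) * f t by ring, hmul, one_mul]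
        _ ≤ Real.exp (-ω * t) * (b * ‖x‖ ^ 2) :=
            mul_le_mul_of_nonneg_left (hfin.trans h0) (Real.exp_pos _).le
    have hlow := hlower (S t x)
    have : a * ‖S t x‖ ^ 2 ≤ Real.exp (-ω * t) * (b * ‖x‖ ^ 2) := le_trans hlow hft
    rw [div_mul_eq_mul_div, div_mul_eq_mul_div, le_div_iff₀ ha]
    nlinarith
  -- density extension
  intro x
  have hclosed : IsClosed {x : H | ‖S t x‖ ^ 2 ≤ (b / a) * Real.exp (-ω * t) * ‖x‖ ^ 2} := by
    apply isClosed_le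
    · exact ((S t).continuous.norm).pow 2
    · exact (continuous_const.mul (continuous_norm.pow 2))
  have : (D : Set H) ⊆ {x : H | ‖S t x‖ ^ 2 ≤ (b / a) * Real.exp (-ω * t) * ‖x‖ ^ 2} := key
  have h2 := closure_minimal this hclosed
  rw [hdense.closure_eq] at h2
  exact h2 (Set.mem_univ x)
end

section
/- Let 𝒱 : ℝ → (H' →L H') be a strongly continuous group with generator Δ (domain D(Δ)), S* : ℝ → (H' →L H') a strongly continuous group, M : H' →L H' bounded, γ > 0, and φ ∈ D(Δ). Define w(t) := ∫₀ᵗ S*(s−t) M 𝒱(s)φ ds for t ∈ [−γ,γ]. Then, if A* denotes the generator of s ↦ S*(s), w(t) ∈ D(A*) and A* w(t) = M𝒱(t)φ − S*(−t)Mφ − ∫₀ᵗ S*(s−t) M 𝒱(s) Δφ ds for each t ∈ [−γ,γ]. -/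
set_option maxHeartbeats 1000000

open MeasureTheory Filter Topology

section Aux
variable {E : Type*} [NormedAddCommGroup E] [NormedSpace ℝ E] [CompleteSpace E]

lemma sg_bound (S : ℝ → E →L[ℝ] E) (hScont : ∀ x : E, Continuous fun t => S t x) (c : ℝ) :
    ∃ C : ℝ, 0 ≤ C ∧ ∀ r ∈ Set.Icc (-c) c, ‖S r‖ ≤ C := by
  obtain ⟨C, hC⟩ := banach_steinhaus (g := fun r : Set.Icc (-c) c => S r) (fun x => by
    obtain ⟨B, hB⟩ := (isCompact_Icc (a := -c) (b := c)).exists_bound_of_continuousOn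
      (hScont x).continuousOn
    exact ⟨B, fun r => hB r r.2⟩)
  exact ⟨max C 0, le_max_right _ _, fun r hr => le_max_of_le_left (hC ⟨r, hr⟩)⟩

lemma sg_joint_cont (S : ℝ → E →L[ℝ] E) (hScont : ∀ x : E, Continuous fun t => S t x) :
    Continuous fun p : ℝ × E => S p.1 p.2 := by
  rw [continuous_iff_continuousAt]
  rintro ⟨r₀, x₀⟩
  obtain ⟨C, hC0, hC⟩ := sg_bound S hScont (|r₀| + 1)
  have h1 : Tendsto (fun p : ℝ × E => S p.1 (p.2 - x₀)) (𝓝 (r₀, x₀)) (𝓝 0) := by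
    apply squeeze_zero_norm' (a := fun p : ℝ × E => C * ‖p.2 - x₀‖)
    · have hmem : Set.Icc (-(|r₀| + 1)) (|r₀| + 1) ∈ 𝓝 r₀ :=
        Icc_mem_nhds (by linarith [neg_abs_le r₀]) (by linarith [le_abs_self r₀])
      filter_upwards [(continuous_fst.tendsto (r₀, x₀)).eventually_mem hmem] with p hp
      calc ‖S p.1 (p.2 - x₀)‖ ≤ ‖S p.1‖ * ‖p.2 - x₀‖ := (S p.1).le_opNorm _
        _ ≤ C * ‖p.2 - x₀‖ := by
            exact mul_le_mul_of_nonneg_right (hC _ hp) (norm_nonneg _)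
    · have : Continuous fun p : ℝ × E => C * ‖p.2 - x₀‖ := by fun_prop
      simpa using this.tendsto (r₀, x₀)
  have h2 : Tendsto (fun p : ℝ × E => S p.1 x₀) (𝓝 (r₀, x₀)) (𝓝 (S r₀ x₀)) :=
    ((hScont x₀).comp continuous_fst).tendsto (r₀, x₀)
  have h3 := h1.add h2
  rw [zero_add] at h3
  refine h3.congr (fun p => ?_)
  simp [map_sub]

lemma tendsto_average (f : ℝ → E) (hf : Continuous f) (a : ℝ) :
    Tendsto (fun h : ℝ => h⁻¹ • ∫ s in a..(a + h), f s) (𝓝[>] 0) (𝓝 (f a)) := by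
  have hF : HasDerivAt (fun u => ∫ s in a..u, f s) (f a) a :=
    intervalIntegral.integral_hasDerivAt_right (hf.intervalIntegrable _ _)
      (hf.stronglyMeasurableAtFilter _ _) hf.continuousAt
  rw [hasDerivAt_iff_tendsto_slope] at hF
  have hmap : Tendsto (fun h : ℝ => a + h) (𝓝[>] (0 : ℝ)) (𝓝[≠] a) := by
    apply tendsto_nhdsWithin_of_tendsto_nhds_of_eventually_within
    · have : Tendsto (fun h : ℝ => a + h) (𝓝 (0 : ℝ)) (𝓝 a) := by
        simpa using (continuous_add_left a).tendsto (0 : ℝ)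
      exact this.mono_left nhdsWithin_le_nhds
    · filter_upwards [self_mem_nhdsWithin] with h hh
      have : (0 : ℝ) < h := hh
      simp only [Set.mem_compl_iff, Set.mem_singleton_iff]
      intro hc
      nlinarith [hc]
  have := hF.comp hmap
  refine this.congr (fun h => ?_)
  simp only [Function.comp_apply, slope_def_module, intervalIntegral.integral_same,
    add_sub_cancel_left, sub_zero]

end Aux

/-- w(t) = ∫₀ᵗ S(s−t) M 𝒱(s)φ ds lies in D(A*) with an explicit formula for A*w(t). -/
theorem w_in_domain_and_formula
    {E : Type*} [NormedAddCommGroup E] [NormedSpace ℝ E] [CompleteSpace E]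
    (S Vg : ℝ → E →L[ℝ] E) (M : E →L[ℝ] E)
    (A Δ : E →ₗ[ℝ] E) (domA domΔ : Submodule ℝ E)
    (hS0 : S 0 = 1) (hSadd : ∀ t s : ℝ, S (t + s) = (S t).comp (S s))
    (hScont : ∀ x : E, Continuous fun t => S t x)
    (hV0 : Vg 0 = 1) (hVadd : ∀ t s : ℝ, Vg (t + s) = (Vg t).comp (Vg s))
    (hVcont : ∀ x : E, Continuous fun t => Vg t x)
    (hgenS : ∀ x ∈ domA,
      Tendsto (fun h : ℝ => h⁻¹ • (S h x - x)) (𝓝[>] 0) (𝓝 (A x)))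
    (hdomA : ∀ x : E,
      (∃ y : E, Tendsto (fun h : ℝ => h⁻¹ • (S h x - x)) (𝓝[>] 0) (𝓝 y)) → x ∈ domA)
    (hgenV : ∀ x ∈ domΔ,
      Tendsto (fun h : ℝ => h⁻¹ • (Vg h x - x)) (𝓝[>] 0) (𝓝 (Δ x)))
    (γ : ℝ) (hγ : 0 < γ) (φ : E) (hφ : φ ∈ domΔ) :
    ∀ t ∈ Set.Icc (-γ) γ,
      (∫ s in (0:ℝ)..t, S (s - t) (M (Vg s φ))) ∈ domA ∧
      A (∫ s in (0:ℝ)..t, S (s - t) (M (Vg s φ)))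
        = M (Vg t φ) - S (-t) (M φ)
          - ∫ s in (0:ℝ)..t, S (s - t) (M (Vg s (Δ φ))) := by
  intro t ht
  obtain ⟨ht1, ht2⟩ := ht
  have hMc := M.continuous
  have hSE := sg_joint_cont S hScont
  set f : ℝ → E := fun s => S (s - t) (M (Vg s φ)) with hf
  set z : ℝ → E := fun s => S (s - t) (M (Vg s (Δ φ))) with hz
  set w : E := ∫ s in (0:ℝ)..t, f s with hw
  have hfcont : Continuous f := hSE.comp
    ((continuous_id.sub continuous_const).prodMk (hMc.comp (hVcont φ)))
  have hzcont : Continuous z := hSE.comp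
    ((continuous_id.sub continuous_const).prodMk (hMc.comp (hVcont (Δ φ))))
  have hfi : ∀ a b : ℝ, IntervalIntegrable f volume a b := fun a b =>
    hfcont.intervalIntegrable a b
  -- the difference quotient of Vg at φ
  set u : ℝ → E := fun h => h⁻¹ • (Vg h φ - φ) with hu
  have hulim : Tendsto (fun h => ‖u h - Δ φ‖) (𝓝[>] (0:ℝ)) (𝓝 0) := by
    have h1 := (hgenV φ hφ).sub (tendsto_const_nhds (x := Δ φ))
    rw [sub_self] at h1
    simpa using h1.norm
  -- the four terms
  set Q : ℝ → E := fun h => ∫ s in h..(t + h), S (s - t) (M (Vg (s - h) (u h - Δ φ))) with hQdef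
  set R : ℝ → E := fun h => ∫ s in (0:ℝ)..t, S (s + h - t) (M (Vg s (Δ φ))) with hRdef
  -- limit of Q
  obtain ⟨C₁, hC₁0, hC₁⟩ := sg_bound S hScont (2 * γ + 2)
  obtain ⟨C₂, hC₂0, hC₂⟩ := sg_bound Vg hVcont (2 * γ + 2)
  have hQ : Tendsto Q (𝓝[>] (0:ℝ)) (𝓝 0) := by
    apply squeeze_zero_norm' (a := fun h => C₁ * ‖M‖ * C₂ * ‖u h - Δ φ‖ * |t|)
    · filter_upwards [Ioo_mem_nhdsGT_of_mem (Set.mem_Ico.2 ⟨le_refl (0:ℝ), zero_lt_one⟩)]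
        with h hh
      obtain ⟨hh0, hh1⟩ := hh
      have hb : ∀ s ∈ Set.uIoc h (t + h),
          ‖S (s - t) (M (Vg (s - h) (u h - Δ φ)))‖ ≤ C₁ * ‖M‖ * C₂ * ‖u h - Δ φ‖ := by
        intro s hs
        have hs' : s ∈ Set.uIcc h (t + h) := Set.Ioc_subset_Icc_self hs
        rw [Set.uIcc_eq_union] at hs'
        have hsb : -γ ≤ s ∧ s ≤ γ + 1 := by
          rcases hs' with hs' | hs' <;> rcases Set.mem_Icc.1 hs' with ⟨hl, hr⟩ <;>
            constructor <;> linarith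
        obtain ⟨hsl, hsr⟩ := hsb
        have h1 : s - t ∈ Set.Icc (-(2*γ+2)) (2*γ+2) := by
          constructor <;> linarith
        have h2 : s - h ∈ Set.Icc (-(2*γ+2)) (2*γ+2) := by
          constructor <;> linarith
        calc ‖S (s - t) (M (Vg (s - h) (u h - Δ φ)))‖
            ≤ ‖S (s - t)‖ * ‖M (Vg (s - h) (u h - Δ φ))‖ := (S _).le_opNorm _
          _ ≤ ‖S (s - t)‖ * (‖M‖ * ‖Vg (s - h) (u h - Δ φ)‖) := by
              gcongr; exact M.le_opNorm _
          _ ≤ ‖S (s - t)‖ * (‖M‖ * (‖Vg (s - h)‖ * ‖u h - Δ φ‖)) := by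
              gcongr; exact (Vg _).le_opNorm _
          _ ≤ C₁ * (‖M‖ * (C₂ * ‖u h - Δ φ‖)) := by
              gcongr
              · exact hC₁ _ h1
              · exact hC₂ _ h2
          _ = C₁ * ‖M‖ * C₂ * ‖u h - Δ φ‖ := by ring
      calc ‖Q h‖ ≤ C₁ * ‖M‖ * C₂ * ‖u h - Δ φ‖ * |t + h - h| :=
            intervalIntegral.norm_integral_le_of_norm_le_const hb
        _ = C₁ * ‖M‖ * C₂ * ‖u h - Δ φ‖ * |t| := by rw [add_sub_cancel_right]
    · have := (hulim.const_mul (C₁ * ‖M‖ * C₂)).mul_const |t|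
      simpa using this
  -- limit of R
  have hRcont : Continuous R := by
    rw [hRdef]
    apply intervalIntegral.continuous_parametric_intervalIntegral_of_continuous'
      (f := fun (h : ℝ) (s : ℝ) => S (s + h - t) (M (Vg s (Δ φ))))
    exact hSE.comp (((continuous_snd.add continuous_fst).sub continuous_const).prodMk
      (hMc.comp ((hVcont (Δ φ)).comp continuous_snd)))
  have hR0 : R 0 = ∫ s in (0:ℝ)..t, z s := by
    rw [hRdef, hz]
    simp only [add_zero]
  have hR : Tendsto R (𝓝[>] (0:ℝ)) (𝓝 (∫ s in (0:ℝ)..t, z s)) := by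
    rw [← hR0]
    exact (hRcont.tendsto 0).mono_left nhdsWithin_le_nhds
  -- limit of B term
  have hft : f t = M (Vg t φ) := by simp [hf, hS0]
  have hB : Tendsto (fun h : ℝ => h⁻¹ • ∫ s in t..(t + h), f s) (𝓝[>] (0:ℝ))
      (𝓝 (M (Vg t φ))) := by
    rw [← hft]; exact tendsto_average f hfcont t
  -- limit of C term
  have hf0 : f 0 = S (-t) (M φ) := by simp [hf, hV0]
  have hC : Tendsto (fun h : ℝ => h⁻¹ • ∫ s in (0:ℝ)..h, f s) (𝓝[>] (0:ℝ))
      (𝓝 (S (-t) (M φ))) := by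
    rw [← hf0]
    exact (tendsto_average f hfcont 0).congr (fun h => by norm_num)
  -- the decomposition identity
  have hdecomp : ∀ h : ℝ, h⁻¹ • (S h w - w)
      = (-(Q h) - R h) + h⁻¹ • (∫ s in t..(t + h), f s) - h⁻¹ • (∫ s in (0:ℝ)..h, f s) := by
    intro h
    have hgcont : Continuous fun s => S (s - t) (M (Vg (s - h) φ)) := hSE.comp
      ((continuous_id.sub continuous_const).prodMk
        (hMc.comp ((hVcont φ).comp (continuous_id.sub continuous_const))))
    have hqcont : Continuous fun s => S (s - t) (M (Vg (s - h) (u h - Δ φ))) := hSE.comp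
      ((continuous_id.sub continuous_const).prodMk
        (hMc.comp ((hVcont (u h - Δ φ)).comp (continuous_id.sub continuous_const))))
    have hrcont : Continuous fun s => S (s - t) (M (Vg (s - h) (Δ φ))) := hSE.comp
      ((continuous_id.sub continuous_const).prodMk
        (hMc.comp ((hVcont (Δ φ)).comp (continuous_id.sub continuous_const))))
    -- Step 1 : S h w as an integral
    have e1 : S h w = ∫ s in h..(t + h), S (s - t) (M (Vg (s - h) φ)) := by
      rw [hw, ← (S h).intervalIntegral_comp_comm (hfi 0 t)]
      have e2 : ∀ s : ℝ, S h (f s) = S (s + h - t) (M (Vg s φ)) := by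
        intro s
        rw [hf]
        show S h (S (s - t) (M (Vg s φ))) = S (s + h - t) (M (Vg s φ))
        rw [show s + h - t = h + (s - t) by ring, hSadd]
        rfl
      rw [intervalIntegral.integral_congr (g := fun s => S (s + h - t) (M (Vg s φ)))
        (fun s _ => e2 s)]
      have := intervalIntegral.integral_comp_add_right (a := (0:ℝ)) (b := t)
        (fun s => S (s - t) (M (Vg (s - h) φ))) h
      simp only [add_sub_cancel_right, zero_add] at this
      exact this
    -- pointwise identity for the integrand difference
    have hpt : ∀ s : ℝ, h⁻¹ • (S (s - t) (M (Vg (s - h) φ)) - f s)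
        = -(S (s - t) (M (Vg (s - h) (u h - Δ φ)))) - S (s - t) (M (Vg (s - h) (Δ φ))) := by
      intro s
      have hVs : Vg s φ = Vg (s - h) (Vg h φ) := by
        have hv := hVadd (s - h) h
        rw [sub_add_cancel] at hv
        rw [hv]; rfl
      have hsm : h⁻¹ • (φ - Vg h φ) = -(u h - Δ φ) - Δ φ := by
        rw [hu]
        simp only
        rw [← neg_sub ((Vg h) φ) φ, smul_neg]
        abel
      rw [hf]
      simp only
      rw [hVs, ← map_sub (S (s - t)), ← map_sub M, ← map_sub (Vg (s - h)),
        ← _root_.map_smul (S (s - t)), ← _root_.map_smul M, ← _root_.map_smul (Vg (s - h)), hsm]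
      simp [map_sub, map_neg]
    -- Chasles decomposition
    have c1 := intervalIntegral.integral_add_adjacent_intervals (hfi h 0) (hfi 0 t)
    have c2 := intervalIntegral.integral_add_adjacent_intervals (hfi h t) (hfi t (t + h))
    have csym : (∫ s in h..(0:ℝ), f s) = -∫ s in (0:ℝ)..h, f s :=
      intervalIntegral.integral_symm 0 h
    have chasles : (∫ s in h..(t + h), f s)
        = (∫ s in t..(t + h), f s) - (∫ s in (0:ℝ)..h, f s) + w := by
      rw [hw, ← c2, ← c1, csym]; abel
    -- change of variables for the r-part
    have hRh : (∫ s in h..(t + h), S (s - t) (M (Vg (s - h) (Δ φ)))) = R h := by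
      rw [hRdef]
      have := intervalIntegral.integral_comp_add_right (a := (0:ℝ)) (b := t)
        (fun s => S (s - t) (M (Vg (s - h) (Δ φ)))) h
      simp only [add_sub_cancel_right, zero_add] at this
      exact this.symm
    -- assemble
    have hsub : S h w - w = (∫ s in h..(t + h),
          (S (s - t) (M (Vg (s - h) φ)) - f s))
        + (∫ s in t..(t + h), f s) - (∫ s in (0:ℝ)..h, f s) := by
      rw [e1, intervalIntegral.integral_sub (hgcont.intervalIntegrable _ _) (hfi _ _)]
      rw [chasles]
      abel
    rw [hsub]
    rw [smul_sub, smul_add, ← intervalIntegral.integral_smul]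
    rw [intervalIntegral.integral_congr (g := fun s =>
      -(S (s - t) (M (Vg (s - h) (u h - Δ φ)))) - S (s - t) (M (Vg (s - h) (Δ φ))))
      (fun s _ => hpt s)]
    rw [intervalIntegral.integral_sub (f := fun s => -(S (s - t) (M (Vg (s - h) (u h - Δ φ))))) (hqcont.neg.intervalIntegrable _ _)
      (hrcont.intervalIntegrable _ _), intervalIntegral.integral_neg, hRh]
  -- the key limit
  have key : Tendsto (fun h : ℝ => h⁻¹ • (S h w - w)) (𝓝[>] (0:ℝ))
      (𝓝 (M (Vg t φ) - S (-t) (M φ) - ∫ s in (0:ℝ)..t, z s)) := by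
    have main := ((hQ.neg.sub hR).add hB).sub hC
    have heq : (-(0:E) - ∫ s in (0:ℝ)..t, z s) + M (Vg t φ) - S (-t) (M φ)
        = M (Vg t φ) - S (-t) (M φ) - ∫ s in (0:ℝ)..t, z s := by abel
    rw [heq] at main
    exact main.congr (fun h => (hdecomp h).symm)
  have hwdom : w ∈ domA := hdomA w ⟨_, key⟩
  exact ⟨hwdom, tendsto_nhds_unique (hgenS w hwdom) key⟩
end

section
/- Suppose the system (with generator 𝒜 of semigroup 𝒮 on H, feedback K ∈ L(D(𝒜);U)) is stabilizable with rate θ: ‖𝒮(t)‖ ≤ C₁e^{−θt}, 𝒜x = (Ã + BK)x on D(𝒜), and ‖K𝒮(·)x‖_{L²(ℝ≥0;U)} ≤ D₁‖x‖. Assume also that for x ∈ D(𝒜) and φ ∈ D(A*): ⟨𝒮(t)x,φ⟩ − ⟨x,S*(t)φ⟩ = ∫₀ᵗ⟨K𝒮(s)x, B*S*(t−s)φ⟩ds. Then for all t > 0 and φ ∈ D(A*): ‖S*(t)φ‖² ≤ 2D₁²∫₀ᵗ‖B*S*(s)φ‖²ds + 2C₁² e^{−2θt}‖φ‖². -/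
open MeasureTheory Filter Topology
open scoped RealInnerProductSpace

/-- If `|⟪x, y⟫| ≤ M * ‖x‖` on a dense set, then `‖y‖ ≤ M`. -/
lemma norm_le_of_dense_inner_le {E : Type*} [NormedAddCommGroup E] [InnerProductSpace ℝ E]
    (D : Set E) (hdense : Dense D) (y : E) (M : ℝ) (hM : 0 ≤ M)
    (h : ∀ x ∈ D, |⟪x, y⟫| ≤ M * ‖x‖) : ‖y‖ ≤ M := by
  have hall : ∀ x : E, |⟪x, y⟫| ≤ M * ‖x‖ := by
    have hclosed : IsClosed {x : E | |⟪x, y⟫| ≤ M * ‖x‖} := by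
      apply isClosed_le
      · exact (continuous_abs.comp (continuous_id.inner continuous_const))
      · exact continuous_const.mul continuous_norm
    intro x
    have : (Set.univ : Set E) ⊆ {x : E | |⟪x, y⟫| ≤ M * ‖x‖} := by
      rw [← hdense.closure_eq]
      exact closure_minimal (fun x hx => h x hx) hclosed
    exact this (Set.mem_univ x)
  have hy := hall y
  rw [real_inner_self_eq_norm_mul_norm] at hy
  rcases eq_or_lt_of_le (norm_nonneg y) with h0 | h0
  · simpa [← h0] using hM
  · have : ‖y‖ * ‖y‖ ≤ M * ‖y‖ := (abs_of_nonneg (mul_self_nonneg ‖y‖) ▸ hy)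
    exact le_of_mul_le_mul_right this h0

/-- stabilizability with rate θ implies the weak observability inequality with 2θ. -/
theorem stabilizable_implies_weak_obs
    {E F : Type*} [NormedAddCommGroup E] [InnerProductSpace ℝ E] [CompleteSpace E]
    [NormedAddCommGroup F] [InnerProductSpace ℝ F] [CompleteSpace F]
    (T S : ℝ → E →L[ℝ] E) (K : E → F) (obs : ℝ → E → F)
    (DA Dcal : Submodule ℝ E) (hdense : Dense (Dcal : Set E))
    (θ C₁ D₁ : ℝ) (hθ : 0 < θ) (hC₁ : 1 ≤ C₁) (hD₁ : 0 ≤ D₁)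
    (hdecay : ∀ t : ℝ, 0 ≤ t → ‖T t‖ ≤ C₁ * Real.exp (-θ * t))
    (hKmeas : ∀ x ∈ Dcal, AEStronglyMeasurable (fun s => K (T s x)) volume)
    (hKint : ∀ x ∈ Dcal, IntegrableOn (fun s => ‖K (T s x)‖ ^ 2) (Set.Ioi 0))
    (hK : ∀ x ∈ Dcal, (∫ s in Set.Ioi (0:ℝ), ‖K (T s x)‖ ^ 2) ≤ D₁ ^ 2 * ‖x‖ ^ 2)
    (hobsmeas : ∀ φ ∈ DA, AEStronglyMeasurable (fun s => obs s φ) volume)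
    (hobsint : ∀ φ ∈ DA, ∀ a b : ℝ,
      IntervalIntegrable (fun s => ‖obs s φ‖ ^ 2) volume a b)
    (hdual : ∀ x ∈ Dcal, ∀ φ ∈ DA, ∀ t : ℝ, 0 ≤ t →
      ⟪T t x, φ⟫ - ⟪x, S t φ⟫
        = ∫ s in (0:ℝ)..t, ⟪K (T s x), obs (t - s) φ⟫) :
    ∀ t > (0:ℝ), ∀ φ ∈ DA,
      ‖S t φ‖ ^ 2 ≤ 2 * D₁ ^ 2 * (∫ s in (0:ℝ)..t, ‖obs s φ‖ ^ 2)
        + 2 * C₁ ^ 2 * Real.exp (-2 * θ * t) * ‖φ‖ ^ 2 := by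
  intro t ht φ hφ
  have ht' : (0:ℝ) ≤ t := ht.le
  set I : ℝ := ∫ s in (0:ℝ)..t, ‖obs s φ‖ ^ 2 with hI
  have hInn : 0 ≤ I := by
    apply intervalIntegral.integral_nonneg ht'
    intro s _; positivity
  set M : ℝ := D₁ * Real.sqrt I + C₁ * Real.exp (-θ * t) * ‖φ‖ with hM
  have hMnn : 0 ≤ M := by positivity
  -- change of variables for obs
  have hcov : (∫ s in (0:ℝ)..t, ‖obs (t - s) φ‖ ^ 2) = I := by
    rw [hI]
    have := intervalIntegral.integral_comp_sub_left (a := (0:ℝ)) (b := t)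
      (fun s => ‖obs s φ‖ ^ 2) t
    simpa using this
  -- integrability of the shifted obs on Ioc 0 t
  have hgint : IntegrableOn (fun s => ‖obs (t - s) φ‖ ^ 2) (Set.Ioc 0 t) := by
    have h1 : IntervalIntegrable (fun s => ‖obs (t - s) φ‖ ^ 2) volume (t - 0) (t - t) :=
      (hobsint φ hφ 0 t).comp_sub_left t
    simp only [sub_zero, sub_self] at h1
    exact h1.symm.1
  -- measurability of the shifted obs
  have hgmeas : AEStronglyMeasurable (fun s => obs (t - s) φ) volume := by
    have hmp : MeasurePreserving (fun s : ℝ => t - s) volume volume :=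
      Measure.measurePreserving_sub_left volume t
    have hemb : MeasurableEmbedding (fun s : ℝ => t - s) :=
      (Homeomorph.subLeft t).measurableEmbedding
    exact (hmp.aestronglyMeasurable_comp_iff hemb).2 (hobsmeas φ hφ)
  -- the key dense-set estimate
  have hkey : ∀ x ∈ Dcal, |⟪x, S t φ⟫| ≤ M * ‖x‖ := by
    intro x hx
    have hd := hdual x hx φ hφ t ht'
    have heq : ⟪x, S t φ⟫ = ⟪T t x, φ⟫ - ∫ s in (0:ℝ)..t, ⟪K (T s x), obs (t - s) φ⟫ := by
      linarith [hd]
    -- bound on the boundary term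
    have hb1 : |⟪T t x, φ⟫| ≤ C₁ * Real.exp (-θ * t) * ‖φ‖ * ‖x‖ := by
      calc |⟪T t x, φ⟫| ≤ ‖T t x‖ * ‖φ‖ := abs_real_inner_le_norm _ _
        _ ≤ (C₁ * Real.exp (-θ * t) * ‖x‖) * ‖φ‖ := by
            apply mul_le_mul_of_nonneg_right _ (norm_nonneg φ)
            exact ((T t).le_opNorm x).trans
              (mul_le_mul_of_nonneg_right (hdecay t ht') (norm_nonneg x))
        _ = C₁ * Real.exp (-θ * t) * ‖φ‖ * ‖x‖ := by ring
    -- L² data for K on Ioc 0 t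
    have hfint : IntegrableOn (fun s => ‖K (T s x)‖ ^ 2) (Set.Ioc 0 t) :=
      (hKint x hx).mono_set Set.Ioc_subset_Ioi_self
    set μ := volume.restrict (Set.Ioc (0:ℝ) t) with hμ
    have hfmeas : AEStronglyMeasurable (fun s => ‖K (T s x)‖) μ :=
      ((hKmeas x hx).norm).restrict
    have hgmeas' : AEStronglyMeasurable (fun s => ‖obs (t - s) φ‖) μ := hgmeas.norm.restrict
    have hf2 : MemLp (fun s => ‖K (T s x)‖) 2 μ := by
      rw [memLp_two_iff_integrable_sq hfmeas]
      simpa [hμ] using hfint.integrable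
    have hg2 : MemLp (fun s => ‖obs (t - s) φ‖) 2 μ := by
      rw [memLp_two_iff_integrable_sq hgmeas']
      simpa [hμ] using hgint.integrable
    -- product is integrable
    have hprod : Integrable (fun s => ‖K (T s x)‖ * ‖obs (t - s) φ‖) μ := by
      apply Integrable.mono'
        ((hf2.integrable_sq.add hg2.integrable_sq).div_const 2) (hfmeas.mul hgmeas')
      refine Eventually.of_forall fun s => ?_
      simp only [Pi.mul_apply, Pi.add_apply]
      rw [Real.norm_of_nonneg (by positivity)]
      nlinarith [sq_nonneg (‖K (T s x)‖ - ‖obs (t - s) φ‖)]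
    have hprodII : IntervalIntegrable (fun s => ‖K (T s x)‖ * ‖obs (t - s) φ‖) volume 0 t :=
      (intervalIntegrable_iff_integrableOn_Ioc_of_le ht').2 hprod
    -- Hölder / Cauchy-Schwarz
    have hconj : Real.HolderConjugate 2 2 := by
      exact Real.HolderConjugate.two_two
    have hCS : (∫ s, ‖K (T s x)‖ * ‖obs (t - s) φ‖ ∂μ)
        ≤ (∫ s, ‖K (T s x)‖ ^ (2:ℝ) ∂μ) ^ (1/(2:ℝ)) *
          (∫ s, ‖obs (t - s) φ‖ ^ (2:ℝ) ∂μ) ^ (1/(2:ℝ)) := by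
      apply MeasureTheory.integral_mul_le_Lp_mul_Lq_of_nonneg hconj
        (Eventually.of_forall fun s => norm_nonneg _)
        (Eventually.of_forall fun s => norm_nonneg _)
      · simpa using hf2
      · simpa using hg2
    have hrpow : ∀ r : ℝ, r ^ (2:ℝ) = r ^ 2 := fun r => by
      rw [show (2:ℝ) = ((2:ℕ):ℝ) by norm_num, Real.rpow_natCast]
    simp only [hrpow] at hCS
    -- bound the K factor
    have hKbound : (∫ s, ‖K (T s x)‖ ^ 2 ∂μ) ≤ D₁ ^ 2 * ‖x‖ ^ 2 := by
      refine le_trans ?_ (hK x hx)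
      rw [hμ]
      apply setIntegral_mono_set (hKint x hx)
        (Eventually.of_forall fun s => by positivity)
      exact HasSubset.Subset.eventuallyLE Set.Ioc_subset_Ioi_self
    have hgI : (∫ s, ‖obs (t - s) φ‖ ^ 2 ∂μ) = I := by
      rw [hμ, ← intervalIntegral.integral_of_le ht', hcov]
    -- bound the integral term
    have hb2 : |∫ s in (0:ℝ)..t, ⟪K (T s x), obs (t - s) φ⟫| ≤ D₁ * Real.sqrt I * ‖x‖ := by
      have h1 : |∫ s in (0:ℝ)..t, ⟪K (T s x), obs (t - s) φ⟫|
          ≤ |∫ s in (0:ℝ)..t, ‖K (T s x)‖ * ‖obs (t - s) φ‖| := by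
        have := intervalIntegral.norm_integral_le_abs_of_norm_le (μ := volume)
          (f := fun s => ⟪K (T s x), obs (t - s) φ⟫) (a := 0) (b := t)
          (g := fun s => ‖K (T s x)‖ * ‖obs (t - s) φ‖)
          (Eventually.of_forall fun s => by
            simpa using abs_real_inner_le_norm (K (T s x)) (obs (t - s) φ)) hprodII
        simpa using this
      have h2 : (∫ s in (0:ℝ)..t, ‖K (T s x)‖ * ‖obs (t - s) φ‖)
          ≤ Real.sqrt (D₁ ^ 2 * ‖x‖ ^ 2) * Real.sqrt I := by
        rw [intervalIntegral.integral_of_le ht']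
        refine hCS.trans ?_
        rw [← Real.sqrt_eq_rpow, ← Real.sqrt_eq_rpow, hgI]
        exact mul_le_mul_of_nonneg_right (Real.sqrt_le_sqrt hKbound) (Real.sqrt_nonneg I)
      have h3 : Real.sqrt (D₁ ^ 2 * ‖x‖ ^ 2) = D₁ * ‖x‖ := by
        rw [show D₁ ^ 2 * ‖x‖ ^ 2 = (D₁ * ‖x‖) ^ 2 by ring]
        exact Real.sqrt_sq (by positivity)
      have h4 : 0 ≤ ∫ s in (0:ℝ)..t, ‖K (T s x)‖ * ‖obs (t - s) φ‖ := by
        apply intervalIntegral.integral_nonneg ht'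
        intro s _; positivity
      rw [abs_of_nonneg h4] at h1
      calc |∫ s in (0:ℝ)..t, ⟪K (T s x), obs (t - s) φ⟫|
          ≤ ∫ s in (0:ℝ)..t, ‖K (T s x)‖ * ‖obs (t - s) φ‖ := h1
        _ ≤ Real.sqrt (D₁ ^ 2 * ‖x‖ ^ 2) * Real.sqrt I := h2
        _ = D₁ * ‖x‖ * Real.sqrt I := by rw [h3]
        _ = D₁ * Real.sqrt I * ‖x‖ := by ring
    calc |⟪x, S t φ⟫| ≤ |⟪T t x, φ⟫| + |∫ s in (0:ℝ)..t, ⟪K (T s x), obs (t - s) φ⟫| := by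
          rw [heq]; exact abs_sub _ _
      _ ≤ C₁ * Real.exp (-θ * t) * ‖φ‖ * ‖x‖ + D₁ * Real.sqrt I * ‖x‖ := add_le_add hb1 hb2
      _ = M * ‖x‖ := by rw [hM]; ring
  -- conclude by density
  have hnorm : ‖S t φ‖ ≤ M := norm_le_of_dense_inner_le _ hdense _ M hMnn hkey
  have hsq : Real.sqrt I ^ 2 = I := Real.sq_sqrt hInn
  have hexp : Real.exp (-2 * θ * t) = Real.exp (-θ * t) * Real.exp (-θ * t) := by
    rw [← Real.exp_add]; ring_nf
  have hnn : 0 ≤ ‖S t φ‖ := norm_nonneg _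
  have h1 : ‖S t φ‖ ^ 2 ≤ M ^ 2 := by nlinarith
  rw [hM] at h1
  rw [hexp]
  nlinarith [h1, hsq, sq_nonneg (D₁ * Real.sqrt I - C₁ * Real.exp (-θ * t) * ‖φ‖)]
end
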